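/- If X and Y are finite-valued random variables and at least one of them takes at most two values, then ρ_m(X;Y)² = (Σ_{x,y} p(x,y)²/(p(x)p(y))) − 1. -/

import Mathlib

open scoped BigOperators

noncomputable section

/-- `p` is a probability mass function on a finite type. -/
def IsPMF {X : Type*} [Fintype X] (p : X → ℝ) : Prop :=
  (∀ x, 0 ≤ p x) ∧ ∑ x, p x = 1

/-- `p` is a joint probability mass function. -/
def IsJointPMF {X Y : Type*} [Fintype X] [Fintype Y] (p : X → Y → ℝ) : Prop :=
  (∀ x y, 0 ≤ p x y) ∧ ∑ x, ∑ y, p x y = 1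

/-- Hirschfeld–Gebelein–Rényi maximal correlation of a joint pmf `p`. -/
def maxCorr {X Y : Type*} [Fintype X] [Fintype Y] (p : X → Y → ℝ) : ℝ :=
  sSup {c : ℝ | ∃ f : X → ℝ, ∃ g : Y → ℝ,
    (∑ x, ∑ y, p x y * f x) = 0 ∧ (∑ x, ∑ y, p x y * g y) = 0 ∧
    (∑ x, ∑ y, p x y * (f x)^2) = 1 ∧ (∑ x, ∑ y, p x y * (g y)^2) = 1 ∧
    c = ∑ x, ∑ y, p x y * f x * g y}

/-- Relative entropy (KL divergence) between pmfs on a finite type. -/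
def KL {X : Type*} [Fintype X] (r p : X → ℝ) : ℝ :=
  ∑ x, r x * Real.log (r x / p x)

/-- `s*(X;Y)` for input distribution `p` and channel `W`. -/
def sStar {X Y : Type*} [Fintype X] [Fintype Y] (p : X → ℝ) (W : X → Y → ℝ) : ℝ :=
  sSup {c : ℝ | ∃ r : X → ℝ, IsPMF r ∧ r ≠ p ∧
    c = KL (fun y => ∑ x, r x * W x y) (fun y => ∑ x, p x * W x y) / KL r p}

/-- Shannon entropy of a pmf on a finite type. -/
def entropy {X : Type*} [Fintype X] (p : X → ℝ) : ℝ :=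
  ∑ x, Real.negMulLog (p x)

/-- Mutual information of a joint pmf. -/
def mutInfo {X Y : Type*} [Fintype X] [Fintype Y] (p : X → Y → ℝ) : ℝ :=
  entropy (fun x => ∑ y, p x y) + entropy (fun y => ∑ x, p x y)
    - entropy (fun z : X × Y => p z.1 z.2)

end

private lemma sqrt_gadget (u v w : ℝ) (hu : 0 < u) (hv : 0 < v) (hw : 0 < w) :
    u * Real.sqrt (v / (u * w)) = Real.sqrt (u * v / w) := by
  rw [show u * v / w = u ^ 2 * (v / (u * w)) by field_simp,
    Real.sqrt_mul (sq_nonneg u), Real.sqrt_sq hu.le]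

private lemma mem_swap {X Y : Type*} [Fintype X] [Fintype Y] (p : X → Y → ℝ) (c : ℝ)
    (h : ∃ f : Y → ℝ, ∃ g : X → ℝ,
      (∑ y, ∑ x, p x y * f y) = 0 ∧ (∑ y, ∑ x, p x y * g x) = 0 ∧
      (∑ y, ∑ x, p x y * (f y)^2) = 1 ∧ (∑ y, ∑ x, p x y * (g x)^2) = 1 ∧
      c = ∑ y, ∑ x, p x y * f y * g x) :
    ∃ f : X → ℝ, ∃ g : Y → ℝ,
      (∑ x, ∑ y, p x y * f x) = 0 ∧ (∑ x, ∑ y, p x y * g y) = 0 ∧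
      (∑ x, ∑ y, p x y * (f x)^2) = 1 ∧ (∑ x, ∑ y, p x y * (g y)^2) = 1 ∧
      c = ∑ x, ∑ y, p x y * f x * g y := by
  obtain ⟨f, g, h1, h2, h3, h4, h5⟩ := h
  refine ⟨g, f, by rw [Finset.sum_comm]; exact h2, by rw [Finset.sum_comm]; exact h1,
    by rw [Finset.sum_comm]; exact h4, by rw [Finset.sum_comm]; exact h3, ?_⟩
  rw [h5, Finset.sum_comm]
  exact Finset.sum_congr rfl fun x _ => Finset.sum_congr rfl fun y _ => by ring

private lemma maxCorr_swap {X Y : Type*} [Fintype X] [Fintype Y] (p : X → Y → ℝ) :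
    maxCorr (fun y x => p x y) = maxCorr p := by
  unfold maxCorr
  congr 1
  ext c
  constructor
  · intro hc
    exact mem_swap p c hc
  · intro hc
    exact mem_swap (fun y x => p x y) c hc

set_option maxHeartbeats 1000000 in
private theorem maxCorr_aux {X Y : Type*} [Fintype X] [Fintype Y]
    (p : X → Y → ℝ) (hp : IsJointPMF p)
    (hx : ∀ x, 0 < ∑ y, p x y) (hy : ∀ y, 0 < ∑ x, p x y)
    (hcard : Fintype.card X ≤ 2) :
    (maxCorr p)^2
      = (∑ x, ∑ y, (p x y)^2 / ((∑ y', p x y') * (∑ x', p x' y))) - 1 := by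
  classical
  rcases Nat.lt_or_ge (Fintype.card X) 2 with h2 | h2
  · rcases Nat.lt_or_ge (Fintype.card X) 1 with h1 | h1
    · -- card X = 0 : impossible
      haveI := Fintype.card_eq_zero_iff.mp (Nat.lt_one_iff.mp h1)
      exact absurd hp.2 (by simp)
    · -- card X = 1
      obtain ⟨x0, hx0⟩ := Fintype.card_eq_one_iff.mp (le_antisymm (by omega) h1)
      have huniv : (Finset.univ : Finset X) = {x0} := by
        ext z; simp [hx0 z]
      have hsX : ∀ f : X → ℝ, ∑ x, f x = f x0 := fun f => by
        rw [huniv, Finset.sum_singleton]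
      have hP1 : ∑ y, p x0 y = 1 := by
        have := hp.2; rwa [hsX (fun x => ∑ y, p x y)] at this
      have hempty : {c : ℝ | ∃ f : X → ℝ, ∃ g : Y → ℝ,
          (∑ x, ∑ y, p x y * f x) = 0 ∧ (∑ x, ∑ y, p x y * g y) = 0 ∧
          (∑ x, ∑ y, p x y * (f x)^2) = 1 ∧ (∑ x, ∑ y, p x y * (g y)^2) = 1 ∧
          c = ∑ x, ∑ y, p x y * f x * g y} = ∅ := by
        ext c
        simp only [Set.mem_setOf_eq, Set.mem_empty_iff_false, iff_false, not_exists]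
        rintro f g ⟨hf0, _, hf1, _, _⟩
        rw [hsX (fun x => ∑ y, p x y * f x), ← Finset.sum_mul, hP1, one_mul] at hf0
        rw [hsX (fun x => ∑ y, p x y * (f x)^2), ← Finset.sum_mul, hP1, one_mul] at hf1
        rw [hf0] at hf1
        simp at hf1
      have hmc : maxCorr p = 0 := by
        unfold maxCorr; rw [hempty, Real.sSup_empty]
      rw [hmc]
      have hR : (∑ x, ∑ y, (p x y)^2 / ((∑ y', p x y') * (∑ x', p x' y))) = 1 := by
        rw [hsX (fun x => ∑ y, (p x y)^2 / ((∑ y', p x y') * (∑ x', p x' y)))]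
        rw [← hP1]
        apply Finset.sum_congr rfl
        intro y _
        have hpy : 0 < p x0 y := by
          have := hy y; rwa [hsX (fun x => p x y)] at this
        rw [hsX (fun x' => p x' y), hP1, one_mul, sq, mul_div_assoc,
          div_self hpy.ne', mul_one]
      rw [hR]; norm_num
  · -- card X = 2
    obtain ⟨a, b, hab, huniv⟩ := Finset.card_eq_two.mp (le_antisymm hcard h2)
    have hsX : ∀ f : X → ℝ, ∑ x, f x = f a + f b := fun f => by
      rw [huniv, Finset.sum_pair hab]
    set Pa := ∑ y, p a y with hPa_def
    set Pb := ∑ y, p b y with hPb_def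
    have hPa : 0 < Pa := hx a
    have hPb : 0 < Pb := hx b
    have hQ : ∀ y, 0 < p a y + p b y := fun y => by
      have := hy y; rwa [hsX (fun x => p x y)] at this
    have hPab : Pa + Pb = 1 := by
      have := hp.2; rwa [hsX (fun x => ∑ y, p x y)] at this
    set sqab := Real.sqrt (Pb / Pa) with hsqab_def
    set sqba := Real.sqrt (Pa / Pb) with hsqba_def
    have e1 : sqab ^ 2 = Pb / Pa := Real.sq_sqrt (div_pos hPb hPa).le
    have e2 : sqba ^ 2 = Pa / Pb := Real.sq_sqrt (div_pos hPa hPb).le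
    have e3 : sqab * sqba = 1 := by
      rw [hsqab_def, hsqba_def, ← Real.sqrt_mul (div_pos hPb hPa).le,
        show Pb / Pa * (Pa / Pb) = 1 by field_simp, Real.sqrt_one]
    have e4 : Pa * sqab = Pb * sqba := by
      have k1 : Pa * sqab = Real.sqrt (Pa * Pb / 1) := by
        rw [hsqab_def, show Pb / Pa = Pb / (Pa * 1) by rw [mul_one]]
        exact sqrt_gadget Pa Pb 1 hPa hPb one_pos
      have k2 : Pb * sqba = Real.sqrt (Pb * Pa / 1) := by
        rw [hsqba_def, show Pa / Pb = Pa / (Pb * 1) by rw [mul_one]]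
        exact sqrt_gadget Pb Pa 1 hPb hPa one_pos
      rw [k1, k2, mul_comm Pa Pb]
    -- the auxiliary function and the chi-square quantity
    set d : Y → ℝ := fun y => sqab * p a y - sqba * p b y with hd_def
    set S := ∑ y, (d y) ^ 2 / (p a y + p b y) with hS_def
    have hS_nonneg : 0 ≤ S :=
      Finset.sum_nonneg fun y _ => div_nonneg (sq_nonneg _) (hQ y).le
    have hsumd : ∑ y, d y = 0 := by
      rw [hd_def]
      rw [Finset.sum_sub_distrib, ← Finset.mul_sum, ← Finset.mul_sum, ← hPa_def, ← hPb_def]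
      rw [mul_comm sqab Pa, mul_comm sqba Pb, e4, sub_self]
    -- key identity: S equals the RHS
    have keyS : S = (∑ x, ∑ y, (p x y)^2 / ((∑ y', p x y') * (∑ x', p x' y))) - 1 := by
      have hQsum : ∑ y, (p a y + p b y) = 1 := by
        rw [Finset.sum_add_distrib, ← hPa_def, ← hPb_def, hPab]
      have percy : ∀ y, (d y) ^ 2 / (p a y + p b y)
          = (p a y)^2 / (Pa * (p a y + p b y)) + (p b y)^2 / (Pb * (p a y + p b y))
            - (p a y + p b y) := by
        intro y
        have hd2 : (d y) ^ 2 = (Pb / Pa) * (p a y)^2 - 2 * (p a y * p b y)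
            + (Pa / Pb) * (p b y)^2 := by
          have : (d y) ^ 2 = sqab ^ 2 * (p a y)^2 - 2 * (sqab * sqba) * (p a y * p b y)
              + sqba ^ 2 * (p b y)^2 := by rw [hd_def]; ring
          rw [this, e1, e2, e3]; ring
        rw [hd2, show Pb = 1 - Pa by linarith]
        have h1Pa : (1 : ℝ) - Pa ≠ 0 := by
          have : Pb = 1 - Pa := by linarith
          rw [← this]; exact hPb.ne'
        field_simp [hPa.ne', h1Pa, (hQ y).ne']
        ring
      rw [hS_def]
      rw [Finset.sum_congr rfl fun y _ => percy y]
      rw [Finset.sum_sub_distrib, Finset.sum_add_distrib, hQsum]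
      congr 1
      rw [hsX (fun x => ∑ y, (p x y)^2 / ((∑ y', p x y') * (∑ x', p x' y)))]
      congr 1
      · apply Finset.sum_congr rfl
        intro y _
        rw [hsX (fun x' => p x' y), ← hPa_def]
      · apply Finset.sum_congr rfl
        intro y _
        rw [hsX (fun x' => p x' y), ← hPb_def]
    -- marginalization helpers
    have margX : ∀ F : X → ℝ, (∑ x, ∑ y, p x y * F x) = Pa * F a + Pb * F b := by
      intro F
      rw [hsX (fun x => ∑ y, p x y * F x), ← Finset.sum_mul, ← Finset.sum_mul]
    have margY : ∀ G : Y → ℝ, (∑ x, ∑ y, p x y * G y) = ∑ y, (p a y + p b y) * G y := by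
      intro G
      rw [Finset.sum_comm]
      exact Finset.sum_congr rfl fun y _ => by
        rw [hsX (fun x => p x y * G y)]; ring
    have margC : ∀ (f : X → ℝ) (g : Y → ℝ),
        (∑ x, ∑ y, p x y * f x * g y) = ∑ y, (f a * p a y + f b * p b y) * g y := by
      intro f g
      rw [Finset.sum_comm]
      exact Finset.sum_congr rfl fun y _ => by
        rw [hsX (fun x => p x y * f x * g y)]; ring
    -- the upper bound
    have hub : ∀ c : ℝ, (∃ f : X → ℝ, ∃ g : Y → ℝ,
        (∑ x, ∑ y, p x y * f x) = 0 ∧ (∑ x, ∑ y, p x y * g y) = 0 ∧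
        (∑ x, ∑ y, p x y * (f x)^2) = 1 ∧ (∑ x, ∑ y, p x y * (g y)^2) = 1 ∧
        c = ∑ x, ∑ y, p x y * f x * g y) → c ≤ Real.sqrt S := by
      rintro c ⟨f, g, hf0, hg0, hf1, hg1, hc⟩
      rw [margX f] at hf0
      rw [margX (fun x => (f x)^2)] at hf1
      rw [margY (fun y => (g y)^2)] at hg1
      rw [margC f g] at hc
      -- forced values of f
      have hfb : f b = -(Pa / Pb) * f a := by
        field_simp
        linarith
      have hfa2 : (f a) ^ 2 = Pb / Pa := by
        have expand : Pa * (f a)^2 + Pb * (-(Pa / Pb) * f a)^2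
            = (f a)^2 * (Pa * (Pa + Pb) / Pb) := by field_simp; ring
        rw [hfb, expand, hPab, mul_one] at hf1
        rw [eq_div_iff hPa.ne']
        field_simp at hf1
        linarith
      have hfb2 : (f b) ^ 2 = Pa / Pb := by
        rw [hfb, show (-(Pa / Pb) * f a)^2 = (Pa / Pb)^2 * (f a)^2 by ring, hfa2]
        field_simp
      have hfab : f a * f b = -1 := by
        rw [hfb, show f a * (-(Pa / Pb) * f a) = -((Pa / Pb) * (f a)^2) by ring, hfa2]
        field_simp
      have hk2 : ∀ y, (f a * p a y + f b * p b y) ^ 2 = (d y) ^ 2 := by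
        intro y
        have r1 : (f a * p a y + f b * p b y)^2
            = (f a)^2 * (p a y)^2 + 2 * (f a * f b) * (p a y * p b y)
              + (f b)^2 * (p b y)^2 := by ring
        have r2 : (d y)^2 = sqab^2 * (p a y)^2 - 2 * (sqab * sqba) * (p a y * p b y)
            + sqba^2 * (p b y)^2 := by rw [hd_def]; ring
        rw [r1, r2, hfa2, hfb2, hfab, e1, e2, e3]; ring
      have hsqne : ∀ y, Real.sqrt (p a y + p b y) ≠ 0 :=
        fun y => (Real.sqrt_pos.mpr (hQ y)).ne'
      have hsq : ∀ y, Real.sqrt (p a y + p b y) ^ 2 = p a y + p b y :=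
        fun y => Real.sq_sqrt (hQ y).le
      have hcs : c ^ 2 ≤ S := by
        have CS := Finset.sum_mul_sq_le_sq_mul_sq Finset.univ
          (fun y => (f a * p a y + f b * p b y) / Real.sqrt (p a y + p b y))
          (fun y => Real.sqrt (p a y + p b y) * g y)
        calc c ^ 2
            = (∑ y, ((f a * p a y + f b * p b y) / Real.sqrt (p a y + p b y))
                * (Real.sqrt (p a y + p b y) * g y)) ^ 2 := by
              rw [hc]; congr 1
              exact Finset.sum_congr rfl fun y _ => by
                rw [div_mul_eq_mul_div, eq_div_iff (hsqne y)]; ring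
          _ ≤ (∑ y, ((f a * p a y + f b * p b y) / Real.sqrt (p a y + p b y)) ^ 2)
              * ∑ y, (Real.sqrt (p a y + p b y) * g y) ^ 2 := CS
          _ = (∑ y, (d y)^2 / (p a y + p b y)) * ∑ y, (p a y + p b y) * (g y)^2 := by
              congr 1
              · exact Finset.sum_congr rfl fun y _ => by
                  rw [div_pow, hk2 y, hsq y]
              · exact Finset.sum_congr rfl fun y _ => by
                  rw [mul_pow, hsq y]
          _ = S := by rw [hg1, mul_one, hS_def]
      calc c ≤ |c| := le_abs_self c
        _ = Real.sqrt (c ^ 2) := (Real.sqrt_sq_eq_abs c).symm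
        _ ≤ Real.sqrt S := Real.sqrt_le_sqrt hcs
    -- properties of the candidate f
    set f0 : X → ℝ := fun x => if x = a then sqab else -sqba with hf0_def
    have hf0a : f0 a = sqab := by rw [hf0_def]; simp
    have hf0b : f0 b = -sqba := by rw [hf0_def]; simp [hab.symm]
    have hf0mean : (∑ x, ∑ y, p x y * f0 x) = 0 := by
      rw [margX f0, hf0a, hf0b, e4]; ring
    have hf0var : (∑ x, ∑ y, p x y * (f0 x)^2) = 1 := by
      rw [margX (fun x => (f0 x)^2), hf0a, hf0b,
        show (-sqba)^2 = sqba^2 by ring, e1, e2,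
        show Pa * (Pb / Pa) = Pb by field_simp,
        show Pb * (Pa / Pb) = Pa by field_simp]
      linarith
    -- Y is nonempty
    have hYne : Nonempty Y := by
      by_contra hne
      haveI := not_nonempty_iff.mp hne
      have hz : Pa = 0 := by rw [hPa_def]; simp
      exact absurd hz hPa.ne'
    haveI : Nonempty Y := hYne
    rcases Nat.lt_or_ge (Fintype.card Y) 2 with hY1 | hY2
    · -- card Y = 1
      have hcY : Fintype.card Y = 1 := by
        have := Fintype.card_pos (α := Y); omega
      obtain ⟨y0, hy0⟩ := Fintype.card_eq_one_iff.mp hcY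
      have hsY : ∀ G : Y → ℝ, ∑ y, G y = G y0 := fun G => by
        rw [show (Finset.univ : Finset Y) = {y0} by ext z; simp [hy0 z],
          Finset.sum_singleton]
      have hQ1 : p a y0 + p b y0 = 1 := by
        have := hsY (fun y => p a y + p b y)
        rw [Finset.sum_add_distrib, ← hPa_def, ← hPb_def, hPab] at this
        exact this.symm
      have hempty : {c : ℝ | ∃ f : X → ℝ, ∃ g : Y → ℝ,
          (∑ x, ∑ y, p x y * f x) = 0 ∧ (∑ x, ∑ y, p x y * g y) = 0 ∧
          (∑ x, ∑ y, p x y * (f x)^2) = 1 ∧ (∑ x, ∑ y, p x y * (g y)^2) = 1 ∧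
          c = ∑ x, ∑ y, p x y * f x * g y} = ∅ := by
        ext c
        simp only [Set.mem_setOf_eq, Set.mem_empty_iff_false, iff_false, not_exists]
        rintro f g ⟨_, hg0, _, hg1, _⟩
        rw [margY g, hsY (fun y => (p a y + p b y) * g y), hQ1, one_mul] at hg0
        rw [margY (fun y => (g y)^2), hsY (fun y => (p a y + p b y) * (g y)^2),
          hQ1, one_mul] at hg1
        rw [hg0] at hg1
        simp at hg1
      have hmc : maxCorr p = 0 := by
        unfold maxCorr; rw [hempty, Real.sSup_empty]
      have hSzero : S = 0 := by
        rw [hS_def, hsY (fun y => (d y)^2 / (p a y + p b y))]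
        have : d y0 = 0 := by
          have := hsY d
          rw [hsumd] at this
          exact this.symm
        rw [this]
        simp
      rw [hmc, ← keyS, hSzero]
      norm_num
    · -- card Y ≥ 2
      have hmain : maxCorr p = Real.sqrt S := by
        unfold maxCorr
        apply IsGreatest.csSup_eq
        constructor
        · -- √S is attained
          by_cases hS0 : S = 0
          · rw [hS0, Real.sqrt_zero]
            -- all d y = 0
            have hdzero : ∀ y, d y = 0 := by
              intro y
              have hz := (Finset.sum_eq_zero_iff_of_nonneg
                (fun y (_ : y ∈ Finset.univ) =>
                  div_nonneg (sq_nonneg (d y)) (hQ y).le)).mp (hS_def ▸ hS0) y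
                (Finset.mem_univ y)
              have := (div_eq_zero_iff.mp hz).resolve_right (hQ y).ne'
              exact pow_eq_zero_iff (n := 2) (by norm_num) |>.mp this
            obtain ⟨y1, y2, hy12⟩ := Fintype.exists_pair_of_one_lt_card hY2
            have hQ1 : 0 < p a y1 + p b y1 := hQ y1
            have hQ2 : 0 < p a y2 + p b y2 := hQ y2
            set Q1 := p a y1 + p b y1 with hQ1_def
            set Q2 := p a y2 + p b y2 with hQ2_def
            set T := Q1 + Q2 with hT_def
            have hT : 0 < T := by positivity
            set c1 := Real.sqrt (Q2 / (Q1 * T)) with hc1_def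
            set c2 := Real.sqrt (Q1 / (Q2 * T)) with hc2_def
            have hc1sq : c1 ^ 2 = Q2 / (Q1 * T) :=
              Real.sq_sqrt (by positivity)
            have hc2sq : c2 ^ 2 = Q1 / (Q2 * T) :=
              Real.sq_sqrt (by positivity)
            have hbal : Q1 * c1 = Q2 * c2 := by
              rw [hc1_def, hc2_def, sqrt_gadget Q1 Q2 T hQ1 hQ2 hT,
                sqrt_gadget Q2 Q1 T hQ2 hQ1 hT, mul_comm Q1 Q2]
            set g0 : Y → ℝ := fun y =>
              (if y = y1 then c1 else 0) + (if y = y2 then -c2 else 0) with hg0_def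
            have hg0sq : ∀ y, (g0 y) ^ 2
                = (if y = y1 then c1 ^ 2 else 0) + (if y = y2 then c2 ^ 2 else 0) := by
              intro y
              simp only [hg0_def]
              by_cases k1 : y = y1 <;> by_cases k2 : y = y2
              · subst k1; exact absurd k2 hy12
              · simp [k1, k2, hy12]
              · simp [k1, k2, Ne.symm hy12, neg_sq]
              · simp [k1, k2]
            refine ⟨f0, g0, hf0mean, ?_, hf0var, ?_, ?_⟩
            · rw [margY g0]
              have : ∀ y, (p a y + p b y) * g0 y
                  = (if y = y1 then (p a y + p b y) * c1 else 0)
                    + (if y = y2 then (p a y + p b y) * (-c2) else 0) := by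
                intro y; simp only [hg0_def]; split_ifs <;> ring
              rw [Finset.sum_congr rfl fun y _ => this y, Finset.sum_add_distrib,
                Finset.sum_ite_eq', Finset.sum_ite_eq']
              simp only [Finset.mem_univ, if_true]
              rw [← hQ1_def, ← hQ2_def]
              rw [show Q1 * c1 + Q2 * (-c2) = Q1 * c1 - Q2 * c2 by ring, hbal, sub_self]
            · rw [margY (fun y => (g0 y)^2)]
              have : ∀ y, (p a y + p b y) * (g0 y) ^ 2
                  = (if y = y1 then (p a y + p b y) * c1 ^ 2 else 0)
                    + (if y = y2 then (p a y + p b y) * c2 ^ 2 else 0) := by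
                intro y; rw [hg0sq y]; split_ifs <;> ring
              rw [Finset.sum_congr rfl fun y _ => this y, Finset.sum_add_distrib,
                Finset.sum_ite_eq', Finset.sum_ite_eq']
              simp only [Finset.mem_univ, if_true]
              rw [← hQ1_def, ← hQ2_def, hc1sq, hc2sq]
              field_simp
              ring
            · rw [margC f0 g0, hf0a, hf0b]
              have : ∀ y, (sqab * p a y + -sqba * p b y) * g0 y = 0 := by
                intro y
                have : sqab * p a y + -sqba * p b y = d y := by rw [hd_def]; ring
                rw [this, hdzero y, zero_mul]
              rw [Finset.sum_congr rfl fun y _ => this y]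
              simp
          · have hSpos : 0 < S := lt_of_le_of_ne hS_nonneg (Ne.symm hS0)
            have hsqS : 0 < Real.sqrt S := Real.sqrt_pos.mpr hSpos
            set g0 : Y → ℝ := fun y => d y / ((p a y + p b y) * Real.sqrt S) with hg0_def
            refine ⟨f0, g0, hf0mean, ?_, hf0var, ?_, ?_⟩
            · rw [margY g0]
              have : ∀ y, (p a y + p b y) * g0 y = d y / Real.sqrt S := by
                intro y; simp only [hg0_def]
                rw [eq_div_iff hsqS.ne']
                field_simp [(hQ y).ne']
              rw [Finset.sum_congr rfl fun y _ => this y, ← Finset.sum_div, hsumd,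
                zero_div]
            · rw [margY (fun y => (g0 y)^2)]
              have : ∀ y, (p a y + p b y) * (g0 y) ^ 2 = (d y)^2 / (p a y + p b y) / S := by
                intro y; simp only [hg0_def]
                rw [div_pow, mul_pow, Real.sq_sqrt hS_nonneg]
                field_simp [(hQ y).ne', hS0]
              rw [Finset.sum_congr rfl fun y _ => this y, ← Finset.sum_div, ← hS_def,
                div_self hS0]
            · rw [margC f0 g0, hf0a, hf0b]
              have : ∀ y, (sqab * p a y + -sqba * p b y) * g0 y
                  = (d y)^2 / (p a y + p b y) / Real.sqrt S := by
                intro y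
                rw [show sqab * p a y + -sqba * p b y = d y by simp only [hd_def]; ring]
                simp only [hg0_def]
                field_simp [(hQ y).ne', hsqS.ne']
              rw [Finset.sum_congr rfl fun y _ => this y, ← Finset.sum_div, ← hS_def,
                Real.div_sqrt]
        · exact fun c hc => hub c hc
      rw [hmain, Real.sq_sqrt hS_nonneg, keyS]

/-- if `X` or `Y` takes at most two values, then
`ρ_m(X;Y)² = (Σ_{x,y} p(x,y)²/(p(x)p(y))) − 1`. -/
theorem maxCorr_sq_of_binary {X Y : Type*} [Fintype X] [Fintype Y]
    (p : X → Y → ℝ) (hp : IsJointPMF p)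
    (hx : ∀ x, 0 < ∑ y, p x y) (hy : ∀ y, 0 < ∑ x, p x y)
    (hcard : Fintype.card X ≤ 2 ∨ Fintype.card Y ≤ 2) :
    (maxCorr p)^2
      = (∑ x, ∑ y, (p x y)^2 / ((∑ y', p x y') * (∑ x', p x' y))) - 1 := by
  rcases hcard with h | h
  · exact maxCorr_aux p hp hx hy h
  · have hswap := maxCorr_aux (fun y x => p x y)
      ⟨fun y x => hp.1 x y, by rw [Finset.sum_comm]; exact hp.2⟩ hy hx h
    rw [maxCorr_swap p] at hswap
    rw [hswap, Finset.sum_comm]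
    congr 1
    exact Finset.sum_congr rfl fun x _ => Finset.sum_congr rfl fun y _ => by
      rw [mul_comm]
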